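/- Let (X,d) be a compact metric space, f_{1,∞} an NDS on X, μ a Borel probability measure on X, Z ⊆ X, and s ∈ ℝ. If h̲_μ(f_{1,∞},x) ≥ s for every x ∈ Z and μ(Z) > 0, then h^B_{top}(f_{1,∞},Z) ≥ s and h^{WB}_{top}(f_{1,∞},Z) ≥ s. -/

import Mathlib

open Filter MeasureTheory Set ENNReal

noncomputable section

variable {X : Type} [MetricSpace X]

/-- The iterate `f_1^n = f_n ∘ ⋯ ∘ f_1` of the NDS `f`, where `f 0` is the first map `f_1`. -/
def nIter (f : ℕ → X → X) : ℕ → X → X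
  | 0 => id
  | n + 1 => f n ∘ nIter f n

/-- The Bowen (dynamical) ball `B_n(x, ε)` for the Bowen metric
`d_n(x,y) = max_{0 ≤ j < n} d(f_1^j x, f_1^j y)`. -/
def bowenBall (f : ℕ → X → X) (n : ℕ) (x : X) (ε : ℝ) : Set X :=
  {y | ∀ j < n, dist (nIter f j x) (nIter f j y) < ε}

/-- The Birkhoff sum `S_{1,n} ψ (x) = ∑_{j=0}^{n-1} ψ(f_1^j x)`. -/
def birkSum (f : ℕ → X → X) (ψ : X → ℝ) (n : ℕ) (x : X) : ℝ :=
  ∑ j ∈ Finset.range n, ψ (nIter f j x)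

/-- `S_{1,n} ψ (x, ε) = sup_{y ∈ B_n(x,ε)} S_{1,n} ψ (y)`. -/
def birkSupBall (f : ℕ → X → X) (ψ : X → ℝ) (n : ℕ) (x : X) (ε : ℝ) : ℝ :=
  sSup (birkSum f ψ n '' bowenBall f n x ε)

/-- `M(n, α, ε, Z, ψ)`: infimum of `∑_i exp(-α n_i + S_{1,n_i}ψ(x_i, ε))` over all finite or
countable covers `Z ⊆ ⋃_i B_{n_i}(x_i, ε)` with `n_i ≥ n`. -/
def Mpre (f : ℕ → X → X) (ψ : X → ℝ) (Z : Set X) (n : ℕ) (α ε : ℝ) : ℝ≥0∞ :=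
  sInf { S : ℝ≥0∞ | ∃ (u : Set ℕ) (c : ℕ → X) (m : ℕ → ℕ),
    (∀ i ∈ u, n ≤ m i) ∧ (Z ⊆ ⋃ i ∈ u, bowenBall f (m i) (c i) ε) ∧
    S = ∑' i : u, ENNReal.ofReal (Real.exp (-α * (m i : ℝ) + birkSupBall f ψ (m i) (c i) ε)) }

/-- `𝓜(n, α, ε, Z, ψ)`: as `Mpre` but with the Birkhoff sums evaluated at the centers. -/
def MpreC (f : ℕ → X → X) (ψ : X → ℝ) (Z : Set X) (n : ℕ) (α ε : ℝ) : ℝ≥0∞ :=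
  sInf { S : ℝ≥0∞ | ∃ (u : Set ℕ) (c : ℕ → X) (m : ℕ → ℕ),
    (∀ i ∈ u, n ≤ m i) ∧ (Z ⊆ ⋃ i ∈ u, bowenBall f (m i) (c i) ε) ∧
    S = ∑' i : u, ENNReal.ofReal (Real.exp (-α * (m i : ℝ) + birkSum f ψ (m i) (c i))) }

/-- `M(α, ε, Z, ψ) = lim_{n→∞} M(n, α, ε, Z, ψ)`; the quantity is nondecreasing in `n`,
so the limit is the supremum. -/
def Mlim (f : ℕ → X → X) (ψ : X → ℝ) (Z : Set X) (α ε : ℝ) : ℝ≥0∞ :=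
  ⨆ n : ℕ, Mpre f ψ Z n α ε

/-- `𝓜(α, ε, Z, ψ) = lim_{n→∞} 𝓜(n, α, ε, Z, ψ)`. -/
def MlimC (f : ℕ → X → X) (ψ : X → ℝ) (Z : Set X) (α ε : ℝ) : ℝ≥0∞ :=
  ⨆ n : ℕ, MpreC f ψ Z n α ε

/-- `P^B(ε, Z, ψ) = inf {α : M(α, ε, Z, ψ) = 0}`, as an extended real. -/
def PBeps (f : ℕ → X → X) (ψ : X → ℝ) (Z : Set X) (ε : ℝ) : EReal :=
  sInf (Real.toEReal '' {α : ℝ | Mlim f ψ Z α ε = 0})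

/-- `𝒫^B(ε, Z, ψ) = inf {α : 𝓜(α, ε, Z, ψ) = 0}`. -/
def PBCeps (f : ℕ → X → X) (ψ : X → ℝ) (Z : Set X) (ε : ℝ) : EReal :=
  sInf (Real.toEReal '' {α : ℝ | MlimC f ψ Z α ε = 0})

/-- The Pesin–Pitskel topological pressure `P^B_{f_{1,∞}}(Z, ψ) = lim_{ε→0} P^B(ε, Z, ψ)`. -/
def PB (f : ℕ → X → X) (ψ : X → ℝ) (Z : Set X) : EReal :=
  limUnder (nhdsWithin 0 (Ioi 0)) fun ε : ℝ => PBeps f ψ Z ε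

/-- `W(n, α, ε, Z, ψ)`: the weighted analogue of `Mpre`. -/
def Wpre (f : ℕ → X → X) (ψ : X → ℝ) (Z : Set X) (n : ℕ) (α ε : ℝ) : ℝ≥0∞ :=
  sInf { S : ℝ≥0∞ | ∃ (u : Set ℕ) (cx : ℕ → X) (m : ℕ → ℕ) (c : ℕ → ℝ),
    (∀ i ∈ u, 0 < c i) ∧ (∀ i ∈ u, n ≤ m i) ∧
    (∀ z ∈ Z, 1 ≤ ∑' i : u,
      (bowenBall f (m i) (cx i) ε).indicator (fun _ => ENNReal.ofReal (c i)) z) ∧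
    S = ∑' i : u, ENNReal.ofReal (c i) *
      ENNReal.ofReal (Real.exp (-α * (m i : ℝ) + birkSupBall f ψ (m i) (cx i) ε)) }

/-- `W(α, ε, Z, ψ) = lim_{n→∞} W(n, α, ε, Z, ψ)`. -/
def Wlim (f : ℕ → X → X) (ψ : X → ℝ) (Z : Set X) (α ε : ℝ) : ℝ≥0∞ :=
  ⨆ n : ℕ, Wpre f ψ Z n α ε

/-- `P^W(ε, Z, ψ)`: the critical value of `α` at which `W(α, ε, Z, ψ)` jumps from `∞` to `0`. -/
def PWeps (f : ℕ → X → X) (ψ : X → ℝ) (Z : Set X) (ε : ℝ) : EReal :=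
  sInf (Real.toEReal '' {α : ℝ | Wlim f ψ Z α ε = 0})

/-- The weighted topological pressure `P^W_{f_{1,∞}}(Z, ψ) = lim_{ε→0} P^W(ε, Z, ψ)`. -/
def PW (f : ℕ → X → X) (ψ : X → ℝ) (Z : Set X) : EReal :=
  limUnder (nhdsWithin 0 (Ioi 0)) fun ε : ℝ => PWeps f ψ Z ε

/-- Bowen topological entropy `h^B_top(f_{1,∞}, Z)`, i.e. pressure of the zero potential. -/
def hBtop (f : ℕ → X → X) (Z : Set X) : EReal := PB f (fun _ => 0) Z

/-- Weighted Bowen topological entropy `h^{WB}_top(f_{1,∞}, Z)`. -/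
def hWBtop (f : ℕ → X → X) (Z : Set X) : EReal := PW f (fun _ => 0) Z

/-- `EReal → ℝ≥0∞`, sending `⊤` to `⊤` and everything negative to `0`. -/
def ERealToENNReal (x : EReal) : ℝ≥0∞ := if x = ⊤ then ⊤ else ENNReal.ofReal x.toReal

variable [MeasurableSpace X]

/-- The measure-theoretic local pressure
`P_μ(x,ψ) = lim_{ε→0} liminf_{n→∞} (-log μ(B_n(x,ε)) + S_{1,n}ψ(x))/n`. -/
def Ploc (f : ℕ → X → X) (μ : Measure X) (ψ : X → ℝ) (x : X) : EReal :=
  limUnder (nhdsWithin 0 (Ioi 0)) fun ε : ℝ =>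
    Filter.atTop.liminf fun n : ℕ =>
      (((n : ℝ)⁻¹ : ℝ) : EReal) *
        (-(ENNReal.log (μ (bowenBall f n x ε))) + ((birkSum f ψ n x : ℝ) : EReal))

/-- The integral of an extended-real-valued function: the difference of the lower integrals of
its positive and negative parts. -/
def ERealIntegral (μ : Measure X) (g : X → EReal) : EReal :=
  ((∫⁻ x, ERealToENNReal (g x) ∂μ : ℝ≥0∞) : EReal)
    - ((∫⁻ x, ERealToENNReal (-(g x)) ∂μ : ℝ≥0∞) : EReal)

/-- The measure-theoretic pressure `P_μ(X, ψ) = ∫ P_μ(x, ψ) dμ(x)`. -/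
def Pmeas (f : ℕ → X → X) (μ : Measure X) (ψ : X → ℝ) : EReal :=
  ERealIntegral μ (Ploc f μ ψ)

/-- The measure-theoretic local lower entropy `h̲_μ(f_{1,∞}, x)`. -/
def hloc (f : ℕ → X → X) (μ : Measure X) (x : X) : EReal := Ploc f μ (fun _ => 0) x

/-- The measure-theoretic lower entropy `h̲_μ(f_{1,∞}) = ∫ h̲_μ(f_{1,∞}, x) dμ(x)`. -/
def hmeas (f : ℕ → X → X) (μ : Measure X) : EReal := Pmeas f μ (fun _ => 0)


/-! ### Auxiliary lemmas -/

lemma nIter_cont (f : ℕ → X → X) (hf : ∀ n, Continuous (f n)) : ∀ n, Continuous (nIter f n)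
  | 0 => continuous_id
  | n + 1 => (hf n).comp (nIter_cont f hf n)

lemma bowenBall_mono (f : ℕ → X → X) (n : ℕ) (x : X) {ε ε' : ℝ} (h : ε ≤ ε') :
    bowenBall f n x ε ⊆ bowenBall f n x ε' := fun _ hy j hj => lt_of_lt_of_le (hy j hj) h

lemma bowenBall_tri {f : ℕ → X → X} {n : ℕ} {x y : X} {ε : ℝ}
    (hy : y ∈ bowenBall f n x ε) : bowenBall f n x ε ⊆ bowenBall f n y (2 * ε) := by
  intro z hz j hj
  calc dist (nIter f j y) (nIter f j z)
      ≤ dist (nIter f j y) (nIter f j x) + dist (nIter f j x) (nIter f j z) :=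
        dist_triangle _ _ _
    _ < ε + ε := add_lt_add (by rw [dist_comm]; exact hy j hj) (hz j hj)
    _ = 2 * ε := by ring

lemma isOpen_bowenBall (f : ℕ → X → X) (hf : ∀ n, Continuous (f n)) (n : ℕ) (x : X) (ε : ℝ) :
    IsOpen (bowenBall f n x ε) := by
  have h : bowenBall f n x ε = ⋂ j ∈ Iio n, (nIter f j) ⁻¹' (Metric.ball (nIter f j x) ε) := by
    ext y
    simp [bowenBall, Metric.mem_ball, dist_comm]
  rw [h]
  exact (Set.finite_Iio n).isOpen_biInter fun j _ =>
    Metric.isOpen_ball.preimage (nIter_cont f hf j)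

lemma birkSum_zero (f : ℕ → X → X) (n : ℕ) (x : X) : birkSum f (fun _ => 0) n x = 0 := by
  simp [birkSum]

lemma birkSupBall_zero (f : ℕ → X → X) (n : ℕ) (x : X) (ε : ℝ) :
    birkSupBall f (fun _ => 0) n x ε = 0 := by
  unfold birkSupBall
  rcases (bowenBall f n x ε).eq_empty_or_nonempty with h | h
  · simp [h, Real.sSup_empty]
  · have h2 : birkSum f (fun _ => 0) n '' bowenBall f n x ε = {0} := by
      rw [show birkSum f (fun _ => 0) n = fun _ => (0 : ℝ) from
        funext fun y => birkSum_zero f n y]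
      exact h.image_const 0
    rw [h2, csSup_singleton]

lemma hloc_eq_sSup (f : ℕ → X → X) (μ : Measure X) (x : X) :
    hloc f μ x = sSup ((fun ε : ℝ => atTop.liminf fun n : ℕ =>
      (((n : ℝ)⁻¹ : ℝ) : EReal) * (-(ENNReal.log (μ (bowenBall f n x ε))))) '' Ioi 0) := by
  have hanti : Antitone (fun ε : ℝ => atTop.liminf fun n : ℕ =>
      (((n : ℝ)⁻¹ : ℝ) : EReal) * (-(ENNReal.log (μ (bowenBall f n x ε))))) := by
    intro ε' ε hle
    refine liminf_le_liminf (Eventually.of_forall fun n => ?_)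
    refine mul_le_mul_of_nonneg_left ?_ ?_
    · exact EReal.neg_le_neg_iff.2 (ENNReal.log_le_log_iff.2
        (measure_mono (bowenBall_mono f n x hle)))
    · exact_mod_cast EReal.coe_nonneg.2 (inv_nonneg.2 (Nat.cast_nonneg n))
  have heq : (fun ε : ℝ => atTop.liminf fun n : ℕ =>
      (((n : ℝ)⁻¹ : ℝ) : EReal) * (-(ENNReal.log (μ (bowenBall f n x ε)))
        + ((birkSum f (fun _ => 0) n x : ℝ) : EReal)))
      = fun ε : ℝ => atTop.liminf fun n : ℕ =>
      (((n : ℝ)⁻¹ : ℝ) : EReal) * (-(ENNReal.log (μ (bowenBall f n x ε)))) := by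
    funext ε
    congr 1
    funext n
    rw [birkSum_zero]
    simp
  show Ploc f μ (fun _ => 0) x = _
  unfold Ploc
  rw [heq]
  exact (hanti.tendsto_nhdsGT 0).limUnder_eq


/-- If `h̲_μ(f_{1,∞},x) ≥ s` for all `x ∈ Z` and `μ(Z) > 0`, then the Bowen and
weighted Bowen topological entropies of `Z` are at least `s`. -/
theorem statement3 [CompactSpace X] [BorelSpace X]
    (f : ℕ → X → X) (hf : ∀ n, Continuous (f n))
    (μ : Measure X) [IsProbabilityMeasure μ] (Z : Set X) (s : ℝ)
    (h : ∀ x ∈ Z, (s : EReal) ≤ hloc f μ x) (hμZ : 0 < μ Z) :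
    (s : EReal) ≤ hBtop f Z ∧ (s : EReal) ≤ hWBtop f Z := by
  have key : ∀ α' : ℝ, α' < s →
      (α' : EReal) ≤ hBtop f Z ∧ (α' : EReal) ≤ hWBtop f Z := by
    intro α' hα'
    -- the sets `Z_k`
    set Zk : ℕ → Set X := fun k => {x | x ∈ Z ∧ ∀ n, k ≤ n →
      μ (bowenBall f n x (1 / ((k : ℝ) + 1))) ≤ ENNReal.ofReal (Real.exp (-α' * n))} with hZkdef
    have hsub : Z ⊆ ⋃ k, Zk k := by
      intro x hx
      have h1 : (α' : EReal) < sSup ((fun ε : ℝ => atTop.liminf fun n : ℕ =>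
          (((n : ℝ)⁻¹ : ℝ) : EReal) * (-(ENNReal.log (μ (bowenBall f n x ε))))) '' Ioi 0) := by
        refine lt_of_lt_of_le ?_ ((h x hx).trans_eq (hloc_eq_sSup f μ x))
        exact_mod_cast hα'
      obtain ⟨_, ⟨ε, hε, rfl⟩, hlt⟩ := lt_sSup_iff.1 h1
      have hev : ∀ᶠ n : ℕ in atTop, (α' : EReal) <
          (((n : ℝ)⁻¹ : ℝ) : EReal) * (-(ENNReal.log (μ (bowenBall f n x ε)))) :=
        eventually_lt_of_lt_liminf hlt
      obtain ⟨k₀, hk₀⟩ := eventually_atTop.1 (hev.and (eventually_ge_atTop 1))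
      have hbound : ∀ n, k₀ ≤ n → μ (bowenBall f n x ε) ≤ ENNReal.ofReal (Real.exp (-α' * n)) := by
        intro n hn
        obtain ⟨h1', hn1⟩ := hk₀ n hn
        have hne : (n : ℝ) ≠ 0 := by
          have : (0 : ℝ) < n := by exact_mod_cast hn1
          linarith
        have h2 : ((α' * n : ℝ) : EReal) ≤ -(ENNReal.log (μ (bowenBall f n x ε))) := by
          have h3 := mul_le_mul_of_nonneg_left h1'.le
            (show (0 : EReal) ≤ ((n : ℝ) : EReal) by exact_mod_cast Nat.cast_nonneg (α := ℝ) n)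
          calc ((α' * n : ℝ) : EReal) = ((n : ℝ) : EReal) * ((α' : ℝ) : EReal) := by
                rw [← EReal.coe_mul]; ring_nf
            _ ≤ ((n : ℝ) : EReal) * ((((n : ℝ)⁻¹ : ℝ) : EReal) *
                (-(ENNReal.log (μ (bowenBall f n x ε))))) := h3
            _ = ((((n : ℝ) * (n : ℝ)⁻¹ : ℝ)) : EReal) *
                (-(ENNReal.log (μ (bowenBall f n x ε)))) := by
                rw [← mul_assoc, ← EReal.coe_mul]
            _ = -(ENNReal.log (μ (bowenBall f n x ε))) := by
                rw [mul_inv_cancel₀ hne]; exact one_mul _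
        have h4 : ENNReal.log (μ (bowenBall f n x ε)) ≤ ((-(α' * n) : ℝ) : EReal) := by
          rw [show ((-(α' * n) : ℝ) : EReal) = -((α' * n : ℝ) : EReal) from EReal.coe_neg _]
          exact EReal.le_neg_of_le_neg h2
        calc μ (bowenBall f n x ε) = EReal.exp (ENNReal.log (μ (bowenBall f n x ε))) :=
              (ENNReal.exp_log _).symm
          _ ≤ EReal.exp ((-(α' * n) : ℝ) : EReal) := EReal.exp_monotone h4
          _ = ENNReal.ofReal (Real.exp (-(α' * n))) := EReal.exp_coe _
          _ = ENNReal.ofReal (Real.exp (-α' * n)) := by rw [neg_mul]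
      obtain ⟨k₁, hk₁⟩ := exists_nat_one_div_lt (mem_Ioi.1 hε)
      refine mem_iUnion.2 ⟨max k₀ k₁, hx, fun n hn => ?_⟩
      have hle : 1 / (((max k₀ k₁ : ℕ) : ℝ) + 1) ≤ ε := by
        refine le_trans ?_ hk₁.le
        have h5 : ((k₁ : ℝ) + 1) ≤ (((max k₀ k₁ : ℕ) : ℝ) + 1) := by
          have : (k₁ : ℝ) ≤ ((max k₀ k₁ : ℕ) : ℝ) := by exact_mod_cast le_max_right k₀ k₁
          linarith
        exact one_div_le_one_div_of_le (by positivity) h5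
      exact le_trans (measure_mono (bowenBall_mono f n x hle))
        (hbound n (le_trans (le_max_left k₀ k₁) hn))
    have hpos : ∃ k, 0 < μ (Zk k) := by
      by_contra hcon
      push_neg at hcon
      have h0 : μ Z = 0 := by
        refine le_antisymm ((measure_mono hsub).trans_eq
          (measure_iUnion_null fun k => le_antisymm (hcon k) (zero_le))) (zero_le)
      exact absurd h0 hμZ.ne'
    obtain ⟨k, hk⟩ := hpos
    set ε₀ : ℝ := 1 / (2 * ((k : ℝ) + 1)) with hε₀def
    have hε₀pos : 0 < ε₀ := by positivity
    have h2ε₀ : 2 * ε₀ = 1 / ((k : ℝ) + 1) := by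
      rw [hε₀def]
      have hk1 : ((k : ℝ) + 1) ≠ 0 := by positivity
      field_simp
    -- the main ball estimate
    have hball : ∀ (mi : ℕ) (ci : X), k ≤ mi → (bowenBall f mi ci ε₀ ∩ Zk k).Nonempty →
        μ (bowenBall f mi ci ε₀) ≤ ENNReal.ofReal (Real.exp (-α' * mi)) := by
      rintro mi ci hmi ⟨y, hyB, hyE⟩
      calc μ (bowenBall f mi ci ε₀) ≤ μ (bowenBall f mi y (2 * ε₀)) :=
            measure_mono (bowenBall_tri hyB)
        _ = μ (bowenBall f mi y (1 / ((k : ℝ) + 1))) := by rw [h2ε₀]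
        _ ≤ ENNReal.ofReal (Real.exp (-α' * mi)) := hyE.2 mi hmi
    have hexp : ∀ (β : ℝ), β < α' → ∀ mi : ℕ,
        ENNReal.ofReal (Real.exp (-α' * mi)) ≤ ENNReal.ofReal (Real.exp (-β * mi)) := by
      intro β hβ mi
      refine ENNReal.ofReal_le_ofReal (Real.exp_le_exp.2 ?_)
      have := Nat.cast_nonneg (α := ℝ) mi
      nlinarith
    -- ### unweighted case
    have hMpre : ∀ β : ℝ, β < α' → μ (Zk k) ≤ Mpre f (fun _ => 0) Z k β ε₀ := by
      intro β hβ
      refine le_sInf ?_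
      rintro S ⟨u, c, m, hm, hcov, rfl⟩
      set u' : Set ℕ := {i | i ∈ u ∧ (bowenBall f (m i) (c i) ε₀ ∩ Zk k).Nonempty} with hu'def
      have hu'sub : u' ⊆ u := fun i hi => hi.1
      have hcovE : Zk k ⊆ ⋃ i ∈ u', bowenBall f (m i) (c i) ε₀ := by
        intro e he
        obtain ⟨i, hiu, hmem⟩ := mem_iUnion₂.1 (hcov he.1)
        exact mem_iUnion₂.2 ⟨i, ⟨hiu, ⟨e, hmem, he⟩⟩, hmem⟩
      calc μ (Zk k) ≤ μ (⋃ i ∈ u', bowenBall f (m i) (c i) ε₀) := measure_mono hcovE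
        _ ≤ ∑' i : u', μ (bowenBall f (m i) (c i) ε₀) :=
            measure_biUnion_le μ (to_countable u') _
        _ ≤ ∑' i : u', ENNReal.ofReal (Real.exp (-β * (m i : ℝ))) :=
            ENNReal.tsum_le_tsum fun i =>
              le_trans (hball (m i) (c i) (hm i i.2.1) i.2.2) (hexp β hβ (m i))
        _ = ∑' i : ℕ, u'.indicator (fun i => ENNReal.ofReal (Real.exp (-β * (m i : ℝ)))) i :=
            tsum_subtype u' (fun i : ℕ => ENNReal.ofReal (Real.exp (-β * (m i : ℝ))))
        _ ≤ ∑' i : ℕ, u.indicator (fun i => ENNReal.ofReal (Real.exp (-β * (m i : ℝ)))) i :=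
            ENNReal.tsum_le_tsum fun i =>
              Set.indicator_le_indicator_of_subset hu'sub (fun _ => zero_le) i
        _ = ∑' i : u, ENNReal.ofReal (Real.exp (-β * (m i : ℝ))) :=
            (tsum_subtype u (fun i : ℕ => ENNReal.ofReal (Real.exp (-β * (m i : ℝ))))).symm
        _ = ∑' i : u, ENNReal.ofReal (Real.exp (-β * (m i : ℝ) +
              birkSupBall f (fun _ => 0) (m i) (c i) ε₀)) := by
            simp [birkSupBall_zero]
    have hMpre_anti : ∀ (n : ℕ) (β : ℝ) {e1 e2 : ℝ}, e1 ≤ e2 →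
        Mpre f (fun _ => 0) Z n β e2 ≤ Mpre f (fun _ => 0) Z n β e1 := by
      intro n β e1 e2 h12
      refine sInf_le_sInf ?_
      rintro S ⟨u, c, m, hm, hcov, rfl⟩
      exact ⟨u, c, m, hm,
        hcov.trans (iUnion₂_mono fun i _ => bowenBall_mono f (m i) (c i) h12),
        by simp [birkSupBall_zero]⟩
    have hPBeps : (α' : EReal) ≤ PBeps f (fun _ => 0) Z ε₀ := by
      refine le_sInf ?_
      rintro b ⟨β, hβ0, rfl⟩
      rw [EReal.coe_le_coe_iff]
      by_contra hlt'
      push_neg at hlt'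
      have h6 : μ (Zk k) ≤ Mlim f (fun _ => 0) Z β ε₀ :=
        (hMpre β hlt').trans (le_iSup (fun n => Mpre f (fun _ => 0) Z n β ε₀) k)
      rw [hβ0] at h6
      exact absurd (le_antisymm h6 (zero_le)) hk.ne'
    have hPB_anti : Antitone (fun e => PBeps f (fun _ => 0) Z e) := by
      intro e1 e2 h12
      refine sInf_le_sInf ?_
      rintro b ⟨β, hβ, rfl⟩
      refine ⟨β, ?_, rfl⟩
      have h7 : Mlim f (fun _ => 0) Z β e2 ≤ Mlim f (fun _ => 0) Z β e1 :=
        iSup_mono fun n => hMpre_anti n β h12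
      rw [hβ] at h7
      exact le_antisymm h7 (zero_le)
    have hB : (α' : EReal) ≤ hBtop f Z := by
      show (α' : EReal) ≤ PB f (fun _ => 0) Z
      unfold PB
      rw [(hPB_anti.tendsto_nhdsGT 0).limUnder_eq]
      exact le_trans hPBeps (le_sSup ⟨ε₀, hε₀pos, rfl⟩)
    -- ### weighted case
    have hWpre : ∀ β : ℝ, β < α' → μ (Zk k) ≤ Wpre f (fun _ => 0) Z k β ε₀ := by
      intro β hβ
      refine le_sInf ?_
      rintro S ⟨u, cx, m, c, hc, hm, hcov, rfl⟩
      set u' : Set ℕ := {i | i ∈ u ∧ (bowenBall f (m i) (cx i) ε₀ ∩ Zk k).Nonempty} with hu'def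
      have hu'sub : u' ⊆ u := fun i hi => hi.1
      set g : X → ℝ≥0∞ := fun z => ∑' i : ℕ, u'.indicator
        (fun i => (bowenBall f (m i) (cx i) ε₀).indicator
          (fun _ => ENNReal.ofReal (c i)) z) i with hgdef
      have hmeas_i : ∀ i : ℕ, Measurable (fun z => u'.indicator
          (fun i => (bowenBall f (m i) (cx i) ε₀).indicator
            (fun _ => ENNReal.ofReal (c i)) z) i) := by
        intro i
        by_cases hi : i ∈ u'
        · simp only [Set.indicator_of_mem hi]
          exact measurable_const.indicator (isOpen_bowenBall f hf (m i) (cx i) ε₀).measurableSet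
        · simp only [Set.indicator_of_notMem hi]
          exact measurable_const
      have hgmeas : Measurable g := Measurable.ennreal_tsum hmeas_i
      have hgE : ∀ z ∈ Zk k, 1 ≤ g z := by
        intro z hz
        have h0 := hcov z hz.1
        rw [tsum_subtype u (fun i => (bowenBall f (m i) (cx i) ε₀).indicator
          (fun _ => ENNReal.ofReal (c i)) z)] at h0
        refine h0.trans (le_of_eq (tsum_congr fun i => ?_))
        by_cases hi' : i ∈ u'
        · rw [Set.indicator_of_mem hi', Set.indicator_of_mem hi'.1]
        · by_cases hiu : i ∈ u
          · rw [Set.indicator_of_notMem hi', Set.indicator_of_mem hiu,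
              Set.indicator_of_notMem (fun hzB => hi' ⟨hiu, ⟨z, hzB, hz⟩⟩)]
          · rw [Set.indicator_of_notMem hi', Set.indicator_of_notMem hiu]
      calc μ (Zk k) ≤ μ {z | 1 ≤ g z} := measure_mono fun z hz => hgE z hz
        _ ≤ ∫⁻ z, g z ∂μ := by
            simpa using mul_meas_ge_le_lintegral₀ hgmeas.aemeasurable 1
        _ = ∑' i : ℕ, ∫⁻ z, u'.indicator
            (fun i => (bowenBall f (m i) (cx i) ε₀).indicator
              (fun _ => ENNReal.ofReal (c i)) z) i ∂μ :=
            lintegral_tsum fun i => (hmeas_i i).aemeasurable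
        _ ≤ ∑' i : ℕ, u.indicator (fun i => ENNReal.ofReal (c i) *
            ENNReal.ofReal (Real.exp (-β * (m i : ℝ)))) i := by
            refine ENNReal.tsum_le_tsum fun i => ?_
            by_cases hi : i ∈ u'
            · simp only [Set.indicator_of_mem hi, Set.indicator_of_mem (hu'sub hi)]
              rw [lintegral_indicator_const
                (isOpen_bowenBall f hf (m i) (cx i) ε₀).measurableSet]
              exact mul_le_mul_right
                (le_trans (hball (m i) (cx i) (hm i (hu'sub hi)) hi.2) (hexp β hβ (m i))) _
            · simp only [Set.indicator_of_notMem hi, lintegral_zero]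
              exact zero_le
        _ = ∑' i : u, ENNReal.ofReal (c i) * ENNReal.ofReal (Real.exp (-β * (m i : ℝ))) :=
            (tsum_subtype u (fun i : ℕ => ENNReal.ofReal (c i) *
              ENNReal.ofReal (Real.exp (-β * (m i : ℝ))))).symm
        _ = ∑' i : u, ENNReal.ofReal (c i) * ENNReal.ofReal (Real.exp (-β * (m i : ℝ) +
              birkSupBall f (fun _ => 0) (m i) (cx i) ε₀)) := by
            simp [birkSupBall_zero]
    have hWpre_anti : ∀ (n : ℕ) (β : ℝ) {e1 e2 : ℝ}, e1 ≤ e2 →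
        Wpre f (fun _ => 0) Z n β e2 ≤ Wpre f (fun _ => 0) Z n β e1 := by
      intro n β e1 e2 h12
      refine sInf_le_sInf ?_
      rintro S ⟨u, cx, m, c, hc, hm, hcov, rfl⟩
      refine ⟨u, cx, m, c, hc, hm, fun z hz => (hcov z hz).trans
        (ENNReal.tsum_le_tsum fun i =>
          Set.indicator_le_indicator_of_subset (bowenBall_mono f (m i) (cx i) h12)
            (fun _ => zero_le) z), by simp [birkSupBall_zero]⟩
    have hPWeps : (α' : EReal) ≤ PWeps f (fun _ => 0) Z ε₀ := by
      refine le_sInf ?_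
      rintro b ⟨β, hβ0, rfl⟩
      rw [EReal.coe_le_coe_iff]
      by_contra hlt'
      push_neg at hlt'
      have h6 : μ (Zk k) ≤ Wlim f (fun _ => 0) Z β ε₀ :=
        (hWpre β hlt').trans (le_iSup (fun n => Wpre f (fun _ => 0) Z n β ε₀) k)
      rw [hβ0] at h6
      exact absurd (le_antisymm h6 (zero_le)) hk.ne'
    have hPW_anti : Antitone (fun e => PWeps f (fun _ => 0) Z e) := by
      intro e1 e2 h12
      refine sInf_le_sInf ?_
      rintro b ⟨β, hβ, rfl⟩
      refine ⟨β, ?_, rfl⟩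
      have h7 : Wlim f (fun _ => 0) Z β e2 ≤ Wlim f (fun _ => 0) Z β e1 :=
        iSup_mono fun n => hWpre_anti n β h12
      rw [hβ] at h7
      exact le_antisymm h7 (zero_le)
    have hW : (α' : EReal) ≤ hWBtop f Z := by
      show (α' : EReal) ≤ PW f (fun _ => 0) Z
      unfold PW
      rw [(hPW_anti.tendsto_nhdsGT 0).limUnder_eq]
      exact le_trans hPWeps (le_sSup ⟨ε₀, hε₀pos, rfl⟩)
    exact ⟨hB, hW⟩
  constructor
  · by_contra hc
    push_neg at hc
    obtain ⟨α', h1, h2⟩ := EReal.exists_between_coe_real hc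
    exact absurd (key α' (by exact_mod_cast h2)).1 (not_le.2 h1)
  · by_contra hc
    push_neg at hc
    obtain ⟨α', h1, h2⟩ := EReal.exists_between_coe_real hc
    exact absurd (key α' (by exact_mod_cast h2)).2 (not_le.2 h1)

end
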